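/- In a soft reserve system or a hard reserve system induced by a baseline priority order, for any n ∈ {0, 1, ..., r_u}, every smart reserve matching in M_S^n complies with eligibility requirements, is non-wasteful, respects priorities, and is maximal in beneficiary assignment. -/

import Mathlib

open Finset

section ReserveSystem

variable {I C : Type*} [Fintype I] [DecidableEq I] [Fintype C] [DecidableEq C]

/-- Patient `i` is eligible for category `c` (i.e. `i π_c ∅`). Priorities are encoded by
injective score functions `pr c : Option I → ℕ`, where `none` stands for `∅` and a
higher score means a higher priority. -/
def Elig (pr : C → Option I → ℕ) (c : C) (i : I) : Prop :=
  pr c none < pr c (some i)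

instance (pr : C → Option I → ℕ) (c : C) (i : I) : Decidable (Elig pr c i) := by
  unfold Elig; infer_instance

/-- A matching assigns each patient a category or `none`, respecting capacities `r`. -/
def IsMatching (r : C → ℕ) (μ : I → Option C) : Prop :=
  ∀ c : C, (univ.filter (fun i => μ i = some c)).card ≤ r c

/-- `μ` complies with eligibility requirements. -/
def CompliesEligibility (pr : C → Option I → ℕ) (μ : I → Option C) : Prop :=
  ∀ i c, μ i = some c → Elig pr c i

/-- `μ` is non-wasteful. -/
def NonWasteful (pr : C → Option I → ℕ) (r : C → ℕ) (μ : I → Option C) : Prop :=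
  ∀ i c, Elig pr c i → μ i = none →
    (univ.filter (fun j => μ j = some c)).card = r c

/-- `μ` respects priorities. -/
def RespectsPriorities (pr : C → Option I → ℕ) (μ : I → Option C) : Prop :=
  ∀ i i' c, μ i = some c → μ i' = none → pr c (some i') < pr c (some i)

/-- Soft reserves induced by the baseline priority `π`: every patient is eligible for
every category; the unreserved category `u` ranks patients by `π`; every other category
ranks its beneficiaries above non-beneficiaries and within each group by `π`. -/
def BaselineSoft (π : I → ℕ) (Ben : C → Finset I) (u : C)
    (pr : C → Option I → ℕ) : Prop :=
  (∀ c i, pr c none < pr c (some i)) ∧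
  (∀ i j : I, pr u (some j) < pr u (some i) ↔ π j < π i) ∧
  (∀ c, c ≠ u → ∀ i j : I, pr c (some j) < pr c (some i) ↔
      ((i ∈ Ben c ∧ j ∉ Ben c) ∨ ((i ∈ Ben c ↔ j ∈ Ben c) ∧ π j < π i)))

/-- Hard reserves induced by the baseline priority `π`: only beneficiaries are eligible
for a preferential treatment category, and they are ranked by `π`; the unreserved
category `u` ranks all patients by `π` (all eligible). -/
def BaselineHard (π : I → ℕ) (Ben : C → Finset I) (u : C)
    (pr : C → Option I → ℕ) : Prop :=
  (∀ i, pr u none < pr u (some i)) ∧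
  (∀ i j : I, pr u (some j) < pr u (some i) ↔ π j < π i) ∧
  (∀ c, c ≠ u → ∀ i, (i ∈ Ben c ↔ pr c none < pr c (some i))) ∧
  (∀ c, c ≠ u → ∀ i j, i ∈ Ben c → j ∈ Ben c →
      (pr c (some j) < pr c (some i) ↔ π j < π i))

/-- `i` is matched under `μ` to a preferential treatment category she is a beneficiary
of. -/
def BenefMatched (Ben : C → Finset I) (u : C) (μ : I → Option C) (i : I) : Prop :=
  ∃ c, μ i = some c ∧ c ≠ u ∧ i ∈ Ben c

instance (Ben : C → Finset I) (u : C) (μ : I → Option C) (i : I) :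
    Decidable (BenefMatched Ben u μ i) := by
  unfold BenefMatched; infer_instance

/-- Number of patients matched to preferential treatment categories they are
beneficiaries of. -/
def benefCount (Ben : C → Finset I) (u : C) (μ : I → Option C) : ℕ :=
  (univ.filter (fun i => BenefMatched Ben u μ i)).card

/-- `μ` is a matching that is maximal in beneficiary assignment. -/
def MaxBeneficiary (r : C → ℕ) (Ben : C → Finset I) (u : C) (μ : I → Option C) : Prop :=
  IsMatching r μ ∧ ∀ ν : I → Option C, IsMatching r ν →
    benefCount Ben u ν ≤ benefCount Ben u μ

structure SmartState (I C : Type*) where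
  Ju : Finset I
  J : Finset I
  Ms : Set (I → Option C)

attribute [local instance] Classical.propDecidable

/-- Step 1.(k) of the smart reserve matching algorithm, processing patient `i`. -/
noncomputable def smartStep (Ben : C → Finset I) (u : C) (n : ℕ)
    (st : SmartState I C) (i : I) : SmartState I C :=
  if st.Ju.card < n ∧ ∃ μ ∈ st.Ms, μ i = some u then
    ⟨insert i st.Ju, st.J, {μ ∈ st.Ms | μ i = some u}⟩
  else if ∃ μ ∈ st.Ms, BenefMatched Ben u μ i then
    ⟨st.Ju, insert i st.J, {μ ∈ st.Ms | BenefMatched Ben u μ i}⟩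
  else st

/-- Step 1 of the smart reserve matching algorithm: patients are processed one at a time
along the list `L` (which enumerates the patients in decreasing baseline priority),
starting from the set of all matchings that are maximal in beneficiary assignment. -/
noncomputable def smartRun (r : C → ℕ) (Ben : C → Finset I) (u : C) (n : ℕ)
    (L : List I) : SmartState I C :=
  L.foldl (smartStep Ben u n) ⟨∅, ∅, {μ | MaxBeneficiary r Ben u μ}⟩

/-- Assign one unit of category `c` to the highest baseline-priority remaining eligible
patient (if any). -/
noncomputable def fillOne (pr : C → Option I → ℕ) (π : I → ℕ) (c : C)
    (st : (I → Option C) × Finset I) : (I → Option C) × Finset I :=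
  if h : (st.2.filter (fun i => Elig pr c i)).Nonempty then
    (Function.update st.1
        (Classical.choose (Finset.exists_max_image (st.2.filter (fun i => Elig pr c i)) π h))
        (some c),
     st.2.erase
        (Classical.choose (Finset.exists_max_image (st.2.filter (fun i => Elig pr c i)) π h)))
  else st

/-- The set `M_S^n` of smart reserve matchings with parameter `n`: outcomes of Step 1
(processed along the baseline-priority-decreasing enumeration `L` of the patients),
followed by Step 2, which assigns the committed patients as in a chosen matching of the
final candidate set, and then fills the remaining units of the preferential treatment
categories in an arbitrary order `P` followed by the remaining unreserved units, one at
a time to the highest baseline-priority remaining eligible patient. -/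
noncomputable def SmartMatchings (pr : C → Option I → ℕ) (π : I → ℕ) (r : C → ℕ)
    (Ben : C → Finset I) (u : C) (n : ℕ) : Set (I → Option C) :=
  { σ | ∃ L : List I, L.Nodup ∧ (∀ i : I, i ∈ L) ∧ L.Pairwise (fun a b => π b < π a) ∧
      ∃ μ ∈ (smartRun r Ben u n L).Ms,
        ∃ P : List C, u ∉ P ∧
          (∀ c, c ≠ u → P.count c =
            r c - (((smartRun r Ben u n L).J).filter (fun i => μ i = some c)).card) ∧
          σ = ((P ++ List.replicate (r u - (smartRun r Ben u n L).Ju.card) u).foldl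
                (fun st c => fillOne pr π c st)
                (fun i =>
                    if i ∈ (smartRun r Ben u n L).Ju ∪ (smartRun r Ben u n L).J
                    then μ i else none,
                 univ \ ((smartRun r Ben u n L).Ju ∪ (smartRun r Ben u n L).J))).1 }

/-! ### Auxiliary lemmas -/

lemma card_filter_comp_swap_eq (μ : I → Option C) (a b : I) (c : C)
    [D1 : DecidablePred fun i : I => (μ ∘ Equiv.swap a b) i = some c]
    [D2 : DecidablePred fun i : I => μ i = some c] :
    (univ.filter fun i => (μ ∘ Equiv.swap a b) i = some c).card
      = (univ.filter fun i => μ i = some c).card := by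
  have h : (univ.filter fun i => (μ ∘ Equiv.swap a b) i = some c)
      = (univ.filter fun i => μ i = some c).image (Equiv.swap a b) := by
    ext k
    simp only [mem_image, mem_filter, mem_univ, true_and, Function.comp_apply]
    constructor
    · intro h
      exact ⟨Equiv.swap a b k, h, Equiv.swap_apply_self a b k⟩
    · rintro ⟨x, hx, rfl⟩
      simpa [Equiv.swap_apply_self] using hx
  rw [h, Finset.card_image_of_injective _ (Equiv.injective _)]

lemma card_le_aux {S T : Finset I} (a b : I) (hsub : S.erase b ⊆ T)
    (hbs : b ∈ S → a ∈ T) (has : a ∉ S) : S.card ≤ T.card := by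
  by_cases hbS : b ∈ S
  · have h1 : insert a (S.erase b) ⊆ T := Finset.insert_subset (hbs hbS) hsub
    have h2 := Finset.card_le_card h1
    have h3 : a ∉ S.erase b := fun h => has (Finset.mem_of_mem_erase h)
    rw [Finset.card_insert_of_notMem h3, Finset.card_erase_of_mem hbS] at h2
    have h4 := Finset.card_pos.mpr ⟨b, hbS⟩
    omega
  · rw [Finset.erase_eq_of_notMem hbS] at hsub
    exact Finset.card_le_card hsub

lemma maxBeneficiary_swap (r : C → ℕ) (Ben : C → Finset I) (u : C)
    (μ : I → Option C) (hμ : MaxBeneficiary r Ben u μ) (a b : I)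
    (ha : ¬ BenefMatched Ben u μ a)
    (hb : BenefMatched Ben u μ b → BenefMatched Ben u (μ ∘ Equiv.swap a b) a) :
    MaxBeneficiary r Ben u (μ ∘ Equiv.swap a b) := by
  have hmatch : IsMatching r (μ ∘ Equiv.swap a b) := fun c => by
    rw [card_filter_comp_swap_eq μ a b c]
    exact hμ.1 c
  have hge : benefCount Ben u μ ≤ benefCount Ben u (μ ∘ Equiv.swap a b) := by
    unfold benefCount
    refine card_le_aux a b ?_ ?_ ?_
    · intro k hk
      obtain ⟨hkb, hkS⟩ := Finset.mem_erase.mp hk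
      have hkben : BenefMatched Ben u μ k := (Finset.mem_filter.mp hkS).2
      have hka : k ≠ a := fun h => ha (h ▸ hkben)
      have hkeq : (μ ∘ Equiv.swap a b) k = μ k := by
        simp [Function.comp_apply, Equiv.swap_apply_of_ne_of_ne hka hkb]
      obtain ⟨c, hc1, hc2, hc3⟩ := hkben
      exact Finset.mem_filter.mpr ⟨Finset.mem_univ _, ⟨c, hkeq ▸ hc1, hc2, hc3⟩⟩
    · intro hbS
      exact Finset.mem_filter.mpr ⟨Finset.mem_univ _, hb (Finset.mem_filter.mp hbS).2⟩
    · exact fun hh => ha (Finset.mem_filter.mp hh).2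
  exact ⟨hmatch, fun ν hν => (hμ.2 ν hν).trans hge⟩

/-- Characterization of the candidate set of matchings during the algorithm. -/
def GoodMs (r : C → ℕ) (Ben : C → Finset I) (u : C) (st : SmartState I C) : Prop :=
  st.Ms = {μ | MaxBeneficiary r Ben u μ ∧ (∀ j ∈ st.Ju, μ j = some u) ∧
      ∀ j ∈ st.J, BenefMatched Ben u μ j}

lemma goodMs_step (r : C → ℕ) (Ben : C → Finset I) (u : C) (n : ℕ)
    (st : SmartState I C) (i : I) (h : GoodMs r Ben u st) :
    GoodMs r Ben u (smartStep Ben u n st i) := by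
  unfold GoodMs smartStep at *
  split_ifs with h1 h2
  · ext μ
    simp only [Set.mem_setOf_eq, h, Finset.mem_insert]
    constructor
    · rintro ⟨⟨hm, hju, hj⟩, hu⟩
      exact ⟨hm, fun j hj' => hj'.elim (fun e => e ▸ hu) (hju j), hj⟩
    · rintro ⟨hm, hju, hj⟩
      exact ⟨⟨hm, fun j hj' => hju j (Or.inr hj'), hj⟩, hju i (Or.inl rfl)⟩
  · ext μ
    simp only [Set.mem_setOf_eq, h, Finset.mem_insert]
    constructor
    · rintro ⟨⟨hm, hju, hj⟩, hu⟩
      exact ⟨hm, hju, fun j hj' => hj'.elim (fun e => e ▸ hu) (hj j)⟩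
    · rintro ⟨hm, hju, hj⟩
      exact ⟨⟨hm, hju, fun j hj' => hj j (Or.inr hj')⟩, hj i (Or.inl rfl)⟩
  · exact h

lemma goodMs_fold (r : C → ℕ) (Ben : C → Finset I) (u : C) (n : ℕ) :
    ∀ (L : List I) (st : SmartState I C), GoodMs r Ben u st →
      GoodMs r Ben u (L.foldl (smartStep Ben u n) st)
  | [], _, h => h
  | i :: L, st, h => goodMs_fold r Ben u n L _ (goodMs_step r Ben u n st i h)

lemma smartStep_mono (Ben : C → Finset I) (u : C) (n : ℕ) (st : SmartState I C) (i : I) :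
    st.Ju ⊆ (smartStep Ben u n st i).Ju ∧ st.J ⊆ (smartStep Ben u n st i).J ∧
      (smartStep Ben u n st i).Ms ⊆ st.Ms := by
  unfold smartStep
  split_ifs with h1 h2
  · exact ⟨Finset.subset_insert _ _, subset_rfl, Set.sep_subset _ _⟩
  · exact ⟨subset_rfl, Finset.subset_insert _ _, Set.sep_subset _ _⟩
  · exact ⟨subset_rfl, subset_rfl, subset_rfl⟩

lemma smartFold_mono (Ben : C → Finset I) (u : C) (n : ℕ) :
    ∀ (L : List I) (st : SmartState I C),
      st.Ju ⊆ (L.foldl (smartStep Ben u n) st).Ju ∧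
      st.J ⊆ (L.foldl (smartStep Ben u n) st).J ∧
      (L.foldl (smartStep Ben u n) st).Ms ⊆ st.Ms
  | [], st => ⟨subset_rfl, subset_rfl, subset_rfl⟩
  | i :: L, st => by
      obtain ⟨h1, h2, h3⟩ := smartFold_mono Ben u n L (smartStep Ben u n st i)
      obtain ⟨g1, g2, g3⟩ := smartStep_mono Ben u n st i
      exact ⟨g1.trans h1, g2.trans h2, h3.trans g3⟩

lemma smartFold_card_le (Ben : C → Finset I) (u : C) (n : ℕ) :
    ∀ (L : List I) (st : SmartState I C), st.Ju.card ≤ n →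
      (L.foldl (smartStep Ben u n) st).Ju.card ≤ n
  | [], _, h => h
  | i :: L, st, h => by
      refine smartFold_card_le Ben u n L _ ?_
      unfold smartStep
      split_ifs with h1 h2
      · calc (insert i st.Ju).card ≤ st.Ju.card + 1 := Finset.card_insert_le _ _
          _ ≤ n := h1.1
      · exact h
      · exact h

lemma smartFold_subset_processed (Ben : C → Finset I) (u : C) (n : ℕ) :
    ∀ (L : List I) (st : SmartState I C),
      (L.foldl (smartStep Ben u n) st).Ju ⊆ st.Ju ∪ L.toFinset ∧
      (L.foldl (smartStep Ben u n) st).J ⊆ st.J ∪ L.toFinset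
  | [], st => by simp
  | i :: L, st => by
      obtain ⟨h1, h2⟩ := smartFold_subset_processed Ben u n L (smartStep Ben u n st i)
      have g1 : (smartStep Ben u n st i).Ju ⊆ insert i st.Ju := by
        unfold smartStep; split_ifs <;> simp [Finset.subset_insert]
      have g2 : (smartStep Ben u n st i).J ⊆ insert i st.J := by
        unfold smartStep; split_ifs <;> simp [Finset.subset_insert]
      constructor
      · refine h1.trans ?_
        intro x hx
        rcases Finset.mem_union.mp hx with hx | hx
        · rcases Finset.mem_insert.mp (g1 hx) with rfl | hx'
          · simp
          · exact Finset.mem_union.mpr (Or.inl hx')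
        · simp [hx]
      · refine h2.trans ?_
        intro x hx
        rcases Finset.mem_union.mp hx with hx | hx
        · rcases Finset.mem_insert.mp (g2 hx) with rfl | hx'
          · simp
          · exact Finset.mem_union.mpr (Or.inl hx')
        · simp [hx]

lemma smartFold_new_card_lt (Ben : C → Finset I) (u : C) (n : ℕ) :
    ∀ (L : List I) (st : SmartState I C) (i : I),
      i ∈ (L.foldl (smartStep Ben u n) st).Ju → i ∉ st.Ju → st.Ju.card < n
  | [], _, i => fun h hn => absurd h hn
  | a :: L, st, i => fun h hni => by
      by_cases hmem : i ∈ (smartStep Ben u n st a).Ju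
      · unfold smartStep at hmem
        split_ifs at hmem with h1 h2
        · exact h1.1
        · exact absurd hmem hni
        · exact absurd hmem hni
      · have hrec := smartFold_new_card_lt Ben u n L (smartStep Ben u n st a) i h hmem
        have hle : st.Ju.card ≤ (smartStep Ben u n st a).Ju.card :=
          Finset.card_le_card (smartStep_mono Ben u n st a).1
        omega

lemma key_skip (π : I → ℕ) (r : C → ℕ) (Ben : C → Finset I) (u : C) (n : ℕ)
    (L : List I) (hnd : L.Nodup) (hsort : L.Pairwise (fun a b => π b < π a))
    (i' : I) (hi'L : i' ∈ L)
    (hi'Ju : i' ∉ (smartRun r Ben u n L).Ju) (hi'J : i' ∉ (smartRun r Ben u n L).J) :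
    ∃ st : SmartState I C,
      GoodMs r Ben u st ∧
      (smartRun r Ben u n L).Ms ⊆ st.Ms ∧
      st.Ju ⊆ (smartRun r Ben u n L).Ju ∧ st.J ⊆ (smartRun r Ben u n L).J ∧
      (∀ i ∈ L, π i < π i' →
        i ∉ st.Ju ∧ i ∉ st.J ∧ (i ∈ (smartRun r Ben u n L).Ju → st.Ju.card < n)) ∧
      ¬(st.Ju.card < n ∧ ∃ μ ∈ st.Ms, μ i' = some u) ∧
      ¬(∃ μ ∈ st.Ms, BenefMatched Ben u μ i') := by
  obtain ⟨A, B, rfl⟩ := List.append_of_mem hi'L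
  have hpw := List.pairwise_append.mp hsort
  set init : SmartState I C := ⟨∅, ∅, {μ | MaxBeneficiary r Ben u μ}⟩ with hinit
  set st1 := A.foldl (smartStep Ben u n) init with hst1
  have hrun : smartRun r Ben u n (A ++ i' :: B)
      = B.foldl (smartStep Ben u n) (smartStep Ben u n st1 i') := by
    unfold smartRun
    rw [List.foldl_append]
    rfl
  have hg1 : ¬(st1.Ju.card < n ∧ ∃ μ ∈ st1.Ms, μ i' = some u) := by
    intro hg
    apply hi'Ju
    rw [hrun]
    have hstep : (smartStep Ben u n st1 i').Ju = insert i' st1.Ju := by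
      unfold smartStep; rw [if_pos hg]
    exact (smartFold_mono Ben u n B _).1 (hstep ▸ Finset.mem_insert_self i' st1.Ju)
  have hg2 : ¬(∃ μ ∈ st1.Ms, BenefMatched Ben u μ i') := by
    intro hg
    apply hi'J
    rw [hrun]
    have hstep : (smartStep Ben u n st1 i').J = insert i' st1.J := by
      unfold smartStep; rw [if_neg hg1, if_pos hg]
    exact (smartFold_mono Ben u n B _).2.1 (hstep ▸ Finset.mem_insert_self i' st1.J)
  have hskip : smartStep Ben u n st1 i' = st1 := by
    unfold smartStep; rw [if_neg hg1, if_neg hg2]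
  rw [hskip] at hrun
  have hmono := smartFold_mono Ben u n B st1
  have hproc := smartFold_subset_processed Ben u n A init
  have hgood : GoodMs r Ben u st1 := by
    apply goodMs_fold
    unfold GoodMs
    ext ν
    simp [hinit]
  refine ⟨st1, hgood, ?_, ?_, ?_, ?_, hg1, hg2⟩
  · rw [hrun]; exact hmono.2.2
  · rw [hrun]; exact hmono.1
  · rw [hrun]; exact hmono.2.1
  · intro i hiL hlt
    have hiB : i ∈ B := by
      rcases List.mem_append.mp hiL with hA | hcons
      · have := hpw.2.2 i hA i' (List.mem_cons_self (a := i') (l := B))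
        omega
      · rcases List.mem_cons.mp hcons with rfl | hB
        · omega
        · exact hB
    have hiA : i ∉ A := by
      intro hA
      have := hpw.2.2 i hA i' (List.mem_cons_self (a := i') (l := B))
      omega
    have hiJu1 : i ∉ st1.Ju := by
      intro hmem
      rcases Finset.mem_union.mp (hproc.1 hmem) with h | h
      · simp [hinit] at h
      · exact hiA (List.mem_toFinset.mp h)
    have hiJ1 : i ∉ st1.J := by
      intro hmem
      rcases Finset.mem_union.mp (hproc.2 hmem) with h | h
      · simp [hinit] at h
      · exact hiA (List.mem_toFinset.mp h)
    refine ⟨hiJu1, hiJ1, fun hiJuf => ?_⟩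
    rw [hrun] at hiJuf
    exact smartFold_new_card_lt Ben u n B st1 i hiJuf hiJu1

/-- Invariant maintained during Step 2 (the filling phase). -/
structure FillInv (pr : C → Option I → ℕ) (π : I → ℕ) (r : C → ℕ) (A₀ : Finset I)
    (g : I → Option C) (st : (I → Option C) × Finset I) (Q : List C) : Prop where
  none_iff : ∀ i, st.1 i = none ↔ i ∈ st.2
  subA : st.2 ⊆ A₀
  fixed : ∀ i, i ∉ A₀ → st.1 i = g i
  elig : ∀ i c, st.1 i = some c → Elig pr c i
  budget : ∀ c, (univ.filter fun i => st.1 i = some c).card + Q.count c ≤ r c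
  full : ∀ c, (∃ i ∈ st.2, Elig pr c i) →
    (univ.filter fun i => st.1 i = some c).card + Q.count c = r c
  prio : ∀ i, i ∈ A₀ → ∀ c, st.1 i = some c → ∀ i' ∈ st.2, Elig pr c i' → π i' < π i

lemma fillInv_step {pr : C → Option I → ℕ} {π : I → ℕ} {r : C → ℕ} {A₀ : Finset I}
    {g : I → Option C} (hπ : Function.Injective π) (c : C) (Q : List C)
    (st : (I → Option C) × Finset I) (h : FillInv pr π r A₀ g st (c :: Q)) :
    FillInv pr π r A₀ g (fillOne pr π c st) Q := by
  unfold fillOne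
  split_ifs with hne
  · obtain ⟨haS, hamax⟩ :=
      Classical.choose_spec (Finset.exists_max_image (st.2.filter fun i => Elig pr c i) π hne)
    set a := Classical.choose (Finset.exists_max_image (st.2.filter fun i => Elig pr c i) π hne)
      with ha
    have haA : a ∈ st.2 := (Finset.mem_filter.mp haS).1
    have haE : Elig pr c a := (Finset.mem_filter.mp haS).2
    have hanone : st.1 a = none := (h.none_iff a).mpr haA
    have hfiltc : (univ.filter fun i => Function.update st.1 a (some c) i = some c)
        = insert a (univ.filter fun i => st.1 i = some c) := by
      ext k
      by_cases hk : k = a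
      · subst hk; simp [Function.update_self, hanone]
      · simp [Function.update_of_ne hk, hk]
    have hfiltd : ∀ d, d ≠ c →
        (univ.filter fun i => Function.update st.1 a (some c) i = some d)
        = (univ.filter fun i => st.1 i = some d) := by
      intro d hd
      ext k
      by_cases hk : k = a
      · subst hk
        simp only [mem_filter, mem_univ, true_and, Function.update_self, hanone]
        constructor
        · intro hh; exact absurd (Option.some.inj hh).symm hd
        · intro hh; exact absurd hh (by simp)
      · simp [Function.update_of_ne hk]
    have hcnotin : a ∉ (univ.filter fun i => st.1 i = some c) := by
      simp [hanone]
    refine ⟨?_, ?_, ?_, ?_, ?_, ?_, ?_⟩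
    · intro i
      dsimp only
      by_cases hk : i = a
      · subst hk; simp [Function.update_self]
      · rw [Function.update_of_ne hk]
        rw [h.none_iff i, Finset.mem_erase]
        exact ⟨fun hh => ⟨hk, hh⟩, fun hh => hh.2⟩
    · exact (Finset.erase_subset _ _).trans h.subA
    · intro i hi
      dsimp only
      have hk : i ≠ a := fun e => hi (h.subA (e ▸ haA))
      rw [Function.update_of_ne hk]
      exact h.fixed i hi
    · intro i d hid
      dsimp only at hid
      by_cases hk : i = a
      · subst hk
        rw [Function.update_self] at hid
        exact (Option.some.inj hid) ▸ haE
      · rw [Function.update_of_ne hk] at hid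
        exact h.elig i d hid
    · intro d
      dsimp only
      by_cases hd : d = c
      · subst hd
        rw [hfiltc, Finset.card_insert_of_notMem hcnotin]
        have hb := h.budget d
        rw [List.count_cons_self] at hb
        omega
      · rw [hfiltd d hd]
        have hb := h.budget d
        have hcnt : (c :: Q).count d = Q.count d := by
          simp [List.count_cons, Ne.symm hd]
        omega
    · intro d hex
      dsimp only at hex ⊢
      by_cases hd : d = c
      · subst hd
        rw [hfiltc, Finset.card_insert_of_notMem hcnotin]
        have hb := h.full d ⟨a, haA, haE⟩
        rw [List.count_cons_self] at hb
        omega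
      · rw [hfiltd d hd]
        obtain ⟨j, hj1, hj2⟩ := hex
        have hb := h.full d ⟨j, Finset.mem_of_mem_erase hj1, hj2⟩
        have hcnt : (c :: Q).count d = Q.count d := by
          simp [List.count_cons, Ne.symm hd]
        omega
    · intro i hiA d hid i' hi' hE'
      dsimp only at hid hi'
      have hi'2 : i' ∈ st.2 := Finset.mem_of_mem_erase hi'
      have hi'a : i' ≠ a := (Finset.mem_erase.mp hi').1
      by_cases hk : i = a
      · subst hk
        rw [Function.update_self] at hid
        have hdc : d = c := (Option.some.inj hid).symm
        subst hdc
        have hle : π i' ≤ π a := hamax i' (Finset.mem_filter.mpr ⟨hi'2, hE'⟩)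
        have hne' : π i' ≠ π a := fun e => hi'a (hπ e)
        omega
      · rw [Function.update_of_ne hk] at hid
        exact h.prio i hiA d hid i' hi'2 hE'
  · have hnoelig : ¬ ∃ i ∈ st.2, Elig pr c i := by
      intro ⟨j, hj1, hj2⟩
      exact hne ⟨j, Finset.mem_filter.mpr ⟨hj1, hj2⟩⟩
    refine ⟨h.none_iff, h.subA, h.fixed, h.elig, ?_, ?_, h.prio⟩
    · intro d
      have hb := h.budget d
      have hcnt : Q.count d ≤ (c :: Q).count d := by
        rw [List.count_cons]; split <;> omega
      omega
    · intro d hex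
      by_cases hd : d = c
      · exact absurd (hd ▸ hex) hnoelig
      · have hb := h.full d hex
        have hcnt : (c :: Q).count d = Q.count d := by
          simp [List.count_cons, Ne.symm hd]
        omega

lemma fillInv_fold {pr : C → Option I → ℕ} {π : I → ℕ} {r : C → ℕ} {A₀ : Finset I}
    {g : I → Option C} (hπ : Function.Injective π) :
    ∀ (Q : List C) (st : (I → Option C) × Finset I), FillInv pr π r A₀ g st Q →
      FillInv pr π r A₀ g (Q.foldl (fun st c => fillOne pr π c st) st) []
  | [], _, h => h
  | c :: Q, st, h => fillInv_fold hπ Q _ (fillInv_step hπ c Q st h)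

/-- Proposition 4: for a soft or hard reserve system induced by a baseline priority
order and any `n ∈ {0, …, r_u}`, every smart reserve matching in `M_S^n` complies with
eligibility requirements, is non-wasteful, respects priorities, and is maximal in
beneficiary assignment. -/
theorem smart_matchings_properties
    (π : I → ℕ) (hπ : Function.Injective π)
    (Ben : C → Finset I) (u : C) (hBu : Ben u = univ)
    (pr : C → Option I → ℕ) (hpr : ∀ c, Function.Injective (pr c))
    (r : C → ℕ)
    (hbase : BaselineSoft π Ben u pr ∨ BaselineHard π Ben u pr)
    (n : ℕ) (hn : n ≤ r u)
    (σ : I → Option C) (hσ : σ ∈ SmartMatchings pr π r Ben u n) :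
    CompliesEligibility pr σ ∧ NonWasteful pr r σ ∧ RespectsPriorities pr σ ∧
      MaxBeneficiary r Ben u σ := by
  obtain ⟨L, hnd, hall, hsort, μ, hμMs, P, huP, hPcount, hσeq⟩ := hσ
  subst hσeq
  set S := smartRun r Ben u n L with hS
  have hgood : GoodMs r Ben u S := by
    rw [hS]
    unfold smartRun
    apply goodMs_fold
    unfold GoodMs
    ext ν
    simp
  have hgood' := hgood
  unfold GoodMs at hgood'
  have hμMs' := hμMs
  rw [hgood'] at hμMs'
  obtain ⟨hμmax, hμJu, hμJ⟩ := hμMs'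
  have hcardJu : S.Ju.card ≤ n := by
    rw [hS]
    exact smartFold_card_le Ben u n L _ (by simp)
  have heligu : ∀ i : I, Elig pr u i := by
    rcases hbase with h | h
    · exact fun i => h.1 u i
    · exact fun i => h.1 i
  have hpru : ∀ i j : I, pr u (some j) < pr u (some i) ↔ π j < π i := by
    rcases hbase with h | h
    · exact h.2.1
    · exact h.2.1
  -- eligibility of committed patients
  have heligbase : ∀ i c, (if i ∈ S.Ju ∪ S.J then μ i else none) = some c → Elig pr c i := by
    intro i c hic
    by_cases hi : i ∈ S.Ju ∪ S.J
    · rw [if_pos hi] at hic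
      by_cases hiJu : i ∈ S.Ju
      · rw [hμJu i hiJu] at hic
        obtain rfl : u = c := Option.some.inj hic
        exact heligu i
      · have hiJ : i ∈ S.J := (Finset.mem_union.mp hi).resolve_left hiJu
        obtain ⟨d, hd1, hd2, hd3⟩ := hμJ i hiJ
        rw [hd1] at hic
        obtain rfl : d = c := Option.some.inj hic
        rcases hbase with hsoft | hhard
        · exact hsoft.1 d i
        · exact (hhard.2.2.1 d hd2 i).mp hd3
    · rw [if_neg hi] at hic; cases hic
  -- counting the committed assignments
  have hfilta : (univ.filter fun i => (if i ∈ S.Ju ∪ S.J then μ i else none) = some u)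
      = S.Ju := by
    ext k
    simp only [mem_filter, mem_univ, true_and]
    constructor
    · intro hk
      by_cases hkm : k ∈ S.Ju ∪ S.J
      · rw [if_pos hkm] at hk
        rcases Finset.mem_union.mp hkm with h | h
        · exact h
        · obtain ⟨d, hd1, hd2, _⟩ := hμJ k h
          rw [hd1] at hk
          exact absurd (Option.some.inj hk) hd2
      · rw [if_neg hkm] at hk; cases hk
    · intro hk
      rw [if_pos (Finset.mem_union_left _ hk)]
      exact hμJu k hk
  have hfiltb : ∀ c, c ≠ u →
      (univ.filter fun i => (if i ∈ S.Ju ∪ S.J then μ i else none) = some c)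
        = S.J.filter fun i => μ i = some c := by
    intro c hc
    ext k
    simp only [mem_filter, mem_univ, true_and]
    constructor
    · intro hk
      by_cases hkm : k ∈ S.Ju ∪ S.J
      · rw [if_pos hkm] at hk
        rcases Finset.mem_union.mp hkm with h | h
        · rw [hμJu k h] at hk
          exact absurd (Option.some.inj hk).symm hc
        · exact ⟨h, hk⟩
      · rw [if_neg hkm] at hk; cases hk
    · intro hk
      rw [if_pos (Finset.mem_union_right _ hk.1)]
      exact hk.2
  have hQcu : (P ++ List.replicate (r u - S.Ju.card) u).count u = r u - S.Ju.card := by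
    rw [List.count_append, List.count_eq_zero_of_not_mem huP, List.count_replicate_self,
      Nat.zero_add]
  have hQc : ∀ c, c ≠ u → (P ++ List.replicate (r u - S.Ju.card) u).count c
      = r c - (S.J.filter fun i => μ i = some c).card := by
    intro c hc
    rw [List.count_append, hPcount c hc, List.count_replicate]
    simp [Ne.symm hc]
  have hJcard : ∀ c, (S.J.filter fun i => μ i = some c).card ≤ r c := by
    intro c
    refine le_trans (Finset.card_le_card ?_) (hμmax.1 c)
    intro x hx
    exact Finset.mem_filter.mpr ⟨Finset.mem_univ _, (Finset.mem_filter.mp hx).2⟩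
  -- initial invariant for the filling phase
  have hinv0 : FillInv pr π r (univ \ (S.Ju ∪ S.J))
      (fun i => if i ∈ S.Ju ∪ S.J then μ i else none)
      ((fun i => if i ∈ S.Ju ∪ S.J then μ i else none), univ \ (S.Ju ∪ S.J))
      (P ++ List.replicate (r u - S.Ju.card) u) := by
    refine ⟨?_, ?_, ?_, heligbase, ?_, ?_, ?_⟩
    · intro i
      dsimp only
      by_cases hi : i ∈ S.Ju ∪ S.J
      · rw [if_pos hi]
        simp only [Finset.mem_sdiff, Finset.mem_univ, true_and]
        constructor
        · intro hh
          by_cases hiJu : i ∈ S.Ju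
          · rw [hμJu i hiJu] at hh; cases hh
          · obtain ⟨d, hd1, _, _⟩ := hμJ i ((Finset.mem_union.mp hi).resolve_left hiJu)
            rw [hd1] at hh; cases hh
        · intro hh; exact absurd hi hh
      · rw [if_neg hi]
        simp [hi]
    · exact subset_rfl
    · intro i _; rfl
    · intro c
      dsimp only
      by_cases hc : c = u
      · subst hc
        rw [hfilta, hQcu]
        omega
      · rw [hfiltb c hc, hQc c hc]
        have := hJcard c
        omega
    · intro c _
      dsimp only
      by_cases hc : c = u
      · subst hc
        rw [hfilta, hQcu]
        omega
      · rw [hfiltb c hc, hQc c hc]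
        have := hJcard c
        omega
    · intro i hiA c hic
      exfalso
      dsimp only at hic
      rw [Finset.mem_sdiff] at hiA
      rw [if_neg hiA.2] at hic
      cases hic
  have hinv := fillInv_fold hπ _ _ hinv0
  set F := ((P ++ List.replicate (r u - S.Ju.card) u).foldl (fun st c => fillOne pr π c st)
      ((fun i => if i ∈ S.Ju ∪ S.J then μ i else none), univ \ (S.Ju ∪ S.J))) with hF
  -- basic consequences
  have hComp : CompliesEligibility pr F.1 := fun i c hic => hinv.elig i c hic
  have hMatch : IsMatching r F.1 := by
    intro c
    have := hinv.budget c
    simpa using this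
  have hfixed : ∀ i, i ∈ S.Ju ∪ S.J → F.1 i = μ i := by
    intro i hi
    have h1 := hinv.fixed i (by simp [Finset.mem_sdiff, hi])
    rw [h1, if_pos hi]
  have hNW : NonWasteful pr r F.1 := by
    intro i c hel hnone
    have hi2 : i ∈ F.2 := (hinv.none_iff i).mp hnone
    have := hinv.full c ⟨i, hi2, hel⟩
    simpa using this
  -- uncommitted patients are not beneficiary-matched under μ
  have hskipfact : ∀ k, k ∉ S.Ju → k ∉ S.J → ¬ BenefMatched Ben u μ k := by
    intro k hk1 hk2 hben
    obtain ⟨st, hchar, hMsub, _, _, _, _, hg2⟩ :=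
      key_skip π r Ben u n L hnd hsort k (hall k)
        (by rw [← hS]; exact hk1) (by rw [← hS]; exact hk2)
    rw [← hS] at hMsub
    exact hg2 ⟨μ, hMsub hμMs, hben⟩
  -- maximality in beneficiary assignment
  have hbc1 : benefCount Ben u μ ≤ S.J.card := by
    unfold benefCount
    apply Finset.card_le_card
    intro k hk
    have hkb := (Finset.mem_filter.mp hk).2
    by_contra hkJ
    by_cases hkJu : k ∈ S.Ju
    · obtain ⟨c, hc1, hc2, _⟩ := hkb
      rw [hμJu k hkJu] at hc1
      exact hc2 (Option.some.inj hc1).symm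
    · exact hskipfact k hkJu hkJ hkb
  have hbc2 : S.J.card ≤ benefCount Ben u F.1 := by
    unfold benefCount
    apply Finset.card_le_card
    intro k hk
    obtain ⟨c, hc1, hc2, hc3⟩ := hμJ k hk
    refine Finset.mem_filter.mpr ⟨Finset.mem_univ _, c, ?_, hc2, hc3⟩
    rw [hfixed k (Finset.mem_union_right _ hk), hc1]
  have hMax : MaxBeneficiary r Ben u F.1 := by
    refine ⟨hMatch, fun ν hν => ?_⟩
    have h1 : benefCount Ben u ν ≤ benefCount Ben u μ := hμmax.2 ν hν
    omega
  -- respect of priorities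
  have hRP : RespectsPriorities pr F.1 := by
    intro i i' c hic hi'
    have hi'pool : i' ∈ F.2 := (hinv.none_iff i').mp hi'
    have hi'A₀ : i' ∈ univ \ (S.Ju ∪ S.J) := hinv.subA hi'pool
    have hi'not : i' ∉ S.Ju ∪ S.J := (Finset.mem_sdiff.mp hi'A₀).2
    have hi'Ju : i' ∉ S.Ju := fun h => hi'not (Finset.mem_union_left _ h)
    have hi'J : i' ∉ S.J := fun h => hi'not (Finset.mem_union_right _ h)
    have hnei : i ≠ i' := by
      intro e
      rw [e, hi'] at hic
      cases hic
    have hswapMs : ∀ st : SmartState I C,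
        st.Ms = {ν | MaxBeneficiary r Ben u ν ∧ (∀ j ∈ st.Ju, ν j = some u) ∧
          ∀ j ∈ st.J, BenefMatched Ben u ν j} →
        st.Ju ⊆ S.Ju → st.J ⊆ S.J → i ∉ st.Ju → i ∉ st.J →
        MaxBeneficiary r Ben u (μ ∘ Equiv.swap i' i) →
        (μ ∘ Equiv.swap i' i) ∈ st.Ms := by
      intro st hchar hJusub hJsub histJu histJ hνmax
      have hi'stJu : i' ∉ st.Ju := fun h => hi'Ju (hJusub h)
      have hi'stJ : i' ∉ st.J := fun h => hi'J (hJsub h)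
      have hνval : ∀ k, k ≠ i' → k ≠ i → (μ ∘ Equiv.swap i' i) k = μ k := by
        intro k h1 h2
        simp [Function.comp_apply, Equiv.swap_apply_of_ne_of_ne h1 h2]
      rw [hchar]
      refine ⟨hνmax, ?_, ?_⟩
      · intro j hj
        have hj1 : j ≠ i' := fun e => hi'stJu (e ▸ hj)
        have hj2 : j ≠ i := fun e => histJu (e ▸ hj)
        rw [hνval j hj1 hj2]
        exact hμJu j (hJusub hj)
      · intro j hj
        have hj1 : j ≠ i' := fun e => hi'stJ (e ▸ hj)
        have hj2 : j ≠ i := fun e => histJ (e ▸ hj)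
        obtain ⟨d, hd1, hd2, hd3⟩ := hμJ j (hJsub hj)
        exact ⟨d, (hνval j hj1 hj2).symm ▸ hd1, hd2, hd3⟩
    by_cases hiJu : i ∈ S.Ju
    · have hμi : μ i = some u := hμJu i hiJu
      have hσi : F.1 i = μ i := hfixed i (Finset.mem_union_left _ hiJu)
      have hcu : u = c := by
        rw [hσi, hμi] at hic
        exact Option.some.inj hic
      subst hcu
      rw [hpru]
      rcases lt_trichotomy (π i') (π i) with hlt | heq | hgt
      · exact hlt
      · exact absurd (hπ heq) (Ne.symm hnei)
      · exfalso
        obtain ⟨st, hchar, hMsub, hJusub, hJsub, hclause, hg1, hg2⟩ :=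
          key_skip π r Ben u n L hnd hsort i' (hall i')
            (by rw [← hS]; exact hi'Ju) (by rw [← hS]; exact hi'J)
        unfold GoodMs at hchar
        rw [← hS] at hMsub hJusub hJsub hclause
        obtain ⟨histJu, histJ, hcard⟩ := hclause i (hall i) hgt
        have hcardlt : st.Ju.card < n := hcard hiJu
        have hnbi' : ¬ BenefMatched Ben u μ i' := fun hb => hg2 ⟨μ, hMsub hμMs, hb⟩
        have hnbi : ¬ BenefMatched Ben u μ i := by
          rintro ⟨d, hd1, hd2, _⟩
          rw [hμi] at hd1
          exact hd2 (Option.some.inj hd1).symm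
        have hνmax := maxBeneficiary_swap r Ben u μ hμmax i' i hnbi'
          (fun hb => absurd hb hnbi)
        have hνMs := hswapMs st hchar hJusub hJsub histJu histJ hνmax
        apply hg1
        refine ⟨hcardlt, μ ∘ Equiv.swap i' i, hνMs, ?_⟩
        show μ (Equiv.swap i' i i') = some u
        rw [Equiv.swap_apply_left]
        exact hμi
    · by_cases hiJ : i ∈ S.J
      · obtain ⟨d, hd1, hd2, hd3⟩ := hμJ i hiJ
        have hσi : F.1 i = μ i := hfixed i (Finset.mem_union_right _ hiJ)
        have hdc : d = c := by
          rw [hσi, hd1] at hic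
          exact Option.some.inj hic
        subst hdc
        by_cases hi'B : i' ∈ Ben d
        · have hπlt : π i' < π i := by
            rcases lt_trichotomy (π i') (π i) with hlt | heq | hgt
            · exact hlt
            · exact absurd (hπ heq) (Ne.symm hnei)
            · exfalso
              obtain ⟨st, hchar, hMsub, hJusub, hJsub, hclause, hg1, hg2⟩ :=
                key_skip π r Ben u n L hnd hsort i' (hall i')
                  (by rw [← hS]; exact hi'Ju) (by rw [← hS]; exact hi'J)
              unfold GoodMs at hchar
              rw [← hS] at hMsub hJusub hJsub hclause
              obtain ⟨histJu, histJ, _⟩ := hclause i (hall i) hgt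
              have hnbi' : ¬ BenefMatched Ben u μ i' := fun hb => hg2 ⟨μ, hMsub hμMs, hb⟩
              have hbν : BenefMatched Ben u (μ ∘ Equiv.swap i' i) i' := by
                refine ⟨d, ?_, hd2, hi'B⟩
                show μ (Equiv.swap i' i i') = some d
                rw [Equiv.swap_apply_left]
                exact hd1
              have hνmax := maxBeneficiary_swap r Ben u μ hμmax i' i hnbi' (fun _ => hbν)
              have hνMs := hswapMs st hchar hJusub hJsub histJu histJ hνmax
              exact hg2 ⟨μ ∘ Equiv.swap i' i, hνMs, hbν⟩
          rcases hbase with hsoft | hhard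
          · exact (hsoft.2.2 d hd2 i i').mpr (Or.inr ⟨iff_of_true hd3 hi'B, hπlt⟩)
          · exact (hhard.2.2.2 d hd2 i i' hd3 hi'B).mpr hπlt
        · rcases hbase with hsoft | hhard
          · exact (hsoft.2.2 d hd2 i i').mpr (Or.inl ⟨hd3, hi'B⟩)
          · have h1 : pr d (some i') ≤ pr d none := by
              by_contra hcon
              exact hi'B ((hhard.2.2.1 d hd2 i').mpr (not_le.mp hcon))
            exact lt_of_le_of_lt h1 ((hhard.2.2.1 d hd2 i).mp hd3)
      · have hiA₀ : i ∈ univ \ (S.Ju ∪ S.J) := by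
          simp [Finset.mem_sdiff, hiJu, hiJ]
        have hprio := hinv.prio i hiA₀ c hic i' hi'pool
        by_cases helig' : Elig pr c i'
        · have hπlt : π i' < π i := hprio helig'
          by_cases hcu : c = u
          · subst hcu
            exact (hpru i i').mpr hπlt
          · rcases hbase with hsoft | hhard
            · by_cases hiB : i ∈ Ben c
              · by_cases hi'B2 : i' ∈ Ben c
                · exact (hsoft.2.2 c hcu i i').mpr (Or.inr ⟨iff_of_true hiB hi'B2, hπlt⟩)
                · exact (hsoft.2.2 c hcu i i').mpr (Or.inl ⟨hiB, hi'B2⟩)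
              · by_cases hi'B2 : i' ∈ Ben c
                · exfalso
                  have hτmatch : IsMatching r (F.1 ∘ Equiv.swap i i') := fun e => by
                    rw [card_filter_comp_swap_eq]
                    exact hMatch e
                  have hτi' : (F.1 ∘ Equiv.swap i i') i' = some c := by
                    show F.1 (Equiv.swap i i' i') = some c
                    rw [Equiv.swap_apply_right]
                    exact hic
                  have hnbσi : ¬ BenefMatched Ben u F.1 i := by
                    rintro ⟨e, he1, he2, he3⟩
                    rw [hic] at he1
                    exact hiB ((Option.some.inj he1) ▸ he3)
                  have hlt : benefCount Ben u F.1 < benefCount Ben u (F.1 ∘ Equiv.swap i i') := by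
                    unfold benefCount
                    refine Finset.card_lt_card
                      ((Finset.ssubset_iff_of_subset ?_).mpr ⟨i', ?_, ?_⟩)
                    · intro k hk
                      have hkb := (Finset.mem_filter.mp hk).2
                      have hk1 : k ≠ i := fun e => hnbσi (e ▸ hkb)
                      have hk2 : k ≠ i' := by
                        rintro rfl
                        obtain ⟨e, he1, _, _⟩ := hkb
                        rw [hi'] at he1
                        cases he1
                      obtain ⟨e, he1, he2, he3⟩ := hkb
                      refine Finset.mem_filter.mpr ⟨Finset.mem_univ _, e, ?_, he2, he3⟩
                      show F.1 (Equiv.swap i i' k) = some e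
                      rw [Equiv.swap_apply_of_ne_of_ne hk1 hk2]
                      exact he1
                    · exact Finset.mem_filter.mpr ⟨Finset.mem_univ _, c, hτi', hcu, hi'B2⟩
                    · intro hcon
                      obtain ⟨e, he1, _, _⟩ := (Finset.mem_filter.mp hcon).2
                      rw [hi'] at he1
                      cases he1
                  exact absurd (hMax.2 _ hτmatch) (not_le.mpr hlt)
                · exact (hsoft.2.2 c hcu i i').mpr (Or.inr ⟨iff_of_false hiB hi'B2, hπlt⟩)
            · have hiB := (hhard.2.2.1 c hcu i).mpr (hinv.elig i c hic)
              have hi'B2 := (hhard.2.2.1 c hcu i').mpr helig'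
              exact (hhard.2.2.2 c hcu i i' hiB hi'B2).mpr hπlt
        · rcases hbase with hsoft | hhard
          · exact absurd (hsoft.1 c i') helig'
          · by_cases hcu : c = u
            · subst hcu
              exact absurd (heligu i') helig'
            · have h1 : pr c (some i') ≤ pr c none := not_lt.mp helig'
              exact lt_of_le_of_lt h1 (hinv.elig i c hic)
  exact ⟨hComp, hNW, hRP, hMax⟩

end ReserveSystem
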